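/- Let G and H be connected simple graphs, each of order at least two. Then the mobile general position number of the Cartesian product satisfies mob(G □ H) ≥ max{gpo(G), gpo(H)}, where gpo denotes the outer general position number. -/

import Mathlib

open SimpleGraph

/-- `S` is a general position set of `G`: for all `u, v ∈ S`, every shortest `u,v`-path
contains no vertex of `S` other than `u` and `v`. -/
def IsGPSet {V : Type*} (G : SimpleGraph V) (S : Set V) : Prop :=
  ∀ u ∈ S, ∀ v ∈ S, ∀ p : G.Walk u v, p.IsPath → p.length = G.dist u v →
    ∀ w ∈ p.support, w ∈ S → w = u ∨ w = v

/-- A legal move from the configuration `S` to the configuration `T`: a robot at `u ∈ S`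
moves to an adjacent unoccupied vertex `v ∉ S` so that the resulting configuration
`(S \ {u}) ∪ {v}` is again a general position set. -/
def LegalMove {V : Type*} (G : SimpleGraph V) (S T : Set V) : Prop :=
  IsGPSet G S ∧ ∃ u ∈ S, ∃ v, v ∉ S ∧ G.Adj u v ∧
    T = insert v (S \ {u}) ∧ IsGPSet G T

/-- `S` is a mobile general position set: there is a finite sequence of configurations
`S = S_0, S_1, …, S_k`, each obtained from the previous one by a legal move, whose union
is the whole vertex set. -/
def IsMobileGPSet {V : Type*} (G : SimpleGraph V) (S : Set V) : Prop :=
  IsGPSet G S ∧ ∃ (k : ℕ) (f : ℕ → Set V), f 0 = S ∧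
    (∀ i < k, LegalMove G (f i) (f (i + 1))) ∧
    (⋃ i ∈ Set.Iic k, f i) = Set.univ

/-- The mobile general position number of `G`: the maximum cardinality of a mobile
general position set. -/
noncomputable def mob {V : Type*} (G : SimpleGraph V) : ℕ :=
  sSup {n | ∃ S : Set V, IsMobileGPSet G S ∧ S.ncard = n}

/-- `S` is an outer general position set of `G`: for every `u ∈ S` and every vertex `v`,
every shortest `u,v`-path contains no vertex of `S` other than `u` and `v`. -/
def IsOuterGPSet {V : Type*} (G : SimpleGraph V) (S : Set V) : Prop :=
  ∀ u ∈ S, ∀ v : V, ∀ p : G.Walk u v, p.IsPath → p.length = G.dist u v →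
    ∀ w ∈ p.support, w ∈ S → w = u ∨ w = v

/-- The outer general position number of `G`. -/
noncomputable def gpo {V : Type*} (G : SimpleGraph V) : ℕ :=
  sSup {n | ∃ S : Set V, IsOuterGPSet G S ∧ S.ncard = n}

section Aux
variable {V W : Type*} {G : SimpleGraph V} {H : SimpleGraph W}

lemma walk_length_zero_mem {u v : V} (p : G.Walk u v) (hp : p.length = 0) :
    ∀ w ∈ p.support, w = u := by
  cases p with
  | nil => simp
  | cons h q => simp at hp

/-- Projection of a walk in a box product to both factors. -/
lemma boxProd_walk_proj {x y : V × W} (p : (G □ H).Walk x y) :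
    ∃ (q : G.Walk x.1 y.1) (r : H.Walk x.2 y.2),
      q.length + r.length = p.length ∧
      ∀ z ∈ p.support, z.1 ∈ q.support ∧ z.2 ∈ r.support := by
  induction p with
  | nil => exact ⟨Walk.nil, Walk.nil, by simp, by simp⟩
  | @cons x c y h p ih =>
    obtain ⟨q, r, hlen, hsup⟩ := ih
    rcases (boxProd_adj.mp h) with ⟨hg, he⟩ | ⟨hh, he⟩
    · refine ⟨Walk.cons hg q, r.copy he.symm rfl, by simp [hlen]; omega, ?_⟩
      intro z hz
      rcases List.mem_cons.mp (by simpa using hz) with rfl | hz'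
      · exact ⟨by simp, by rw [Walk.support_copy]; rw [he]; exact r.start_mem_support⟩
      · obtain ⟨h1, h2⟩ := hsup z hz'
        exact ⟨by simp [h1], by rwa [Walk.support_copy]⟩
    · refine ⟨q.copy he.symm rfl, Walk.cons hh r, by simp [hlen]; omega, ?_⟩
      intro z hz
      rcases List.mem_cons.mp (by simpa using hz) with rfl | hz'
      · exact ⟨by rw [Walk.support_copy]; rw [he]; exact q.start_mem_support, by simp⟩
      · obtain ⟨h1, h2⟩ := hsup z hz'
        exact ⟨by rwa [Walk.support_copy], by simp [h2]⟩

lemma boxProd_dist_le (hG : G.Connected) (hH : H.Connected) (x y : V × W) :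
    (G □ H).dist x y ≤ G.dist x.1 y.1 + H.dist x.2 y.2 := by
  obtain ⟨q, hq⟩ := (hG.preconnected x.1 y.1).exists_walk_length_eq_dist
  obtain ⟨r, hr⟩ := (hH.preconnected x.2 y.2).exists_walk_length_eq_dist
  have : (G □ H).dist x y ≤ ((q.boxProdLeft H x.2).append (r.boxProdRight G y.1)).length :=
    SimpleGraph.dist_le _
  have hl1 : (q.boxProdLeft H x.2).length = q.length := Walk.length_map _ _
  have hl2 : (r.boxProdRight G y.1).length = r.length := Walk.length_map _ _
  rwa [Walk.length_append, hl1, hl2, hq, hr] at this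

/-- Projections of a geodesic in a box product are geodesics. -/
lemma boxProd_geodesic_proj (hG : G.Connected) (hH : H.Connected) {x y : V × W}
    (p : (G □ H).Walk x y) (hp : p.length = (G □ H).dist x y) :
    ∃ (q : G.Walk x.1 y.1) (r : H.Walk x.2 y.2),
      q.IsPath ∧ q.length = G.dist x.1 y.1 ∧
      r.IsPath ∧ r.length = H.dist x.2 y.2 ∧
      ∀ z ∈ p.support, z.1 ∈ q.support ∧ z.2 ∈ r.support := by
  obtain ⟨q, r, hlen, hsup⟩ := boxProd_walk_proj p
  have h1 : G.dist x.1 y.1 ≤ q.length := SimpleGraph.dist_le q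
  have h2 : H.dist x.2 y.2 ≤ r.length := SimpleGraph.dist_le r
  have h3 := boxProd_dist_le hG hH x y
  have hq : q.length = G.dist x.1 y.1 := by omega
  have hr : r.length = H.dist x.2 y.2 := by omega
  exact ⟨q, r, q.isPath_of_length_eq_dist hq, hq, r.isPath_of_length_eq_dist hr, hr, hsup⟩

end Aux

/-- Applying the outer general position property when the distinguished vertex of `S` is
the *end* of the geodesic. -/
lemma IsOuterGPSet.rev {S : Set V} (hS : IsOuterGPSet G S) {b c : V} (hb : b ∈ S)
    (q : G.Walk c b) (hqp : q.IsPath) (hql : q.length = G.dist c b)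
    {z : V} (hz : z ∈ q.support) (hzS : z ∈ S) : z = b ∨ z = c := by
  have := hS b hb c q.reverse hqp.reverse
    (by rw [Walk.length_reverse, hql, SimpleGraph.dist_comm])
    z (by rwa [Walk.support_reverse, List.mem_reverse]) hzS
  tauto

/-- Key configuration: the robots occupy `(S \ {a}) × {ℓ}` together with one extra robot at
`(c, h)` where `c ∉ S \ {a}` and either `h ≠ ℓ` or `c = a`. -/
lemma gp_insert_config (hG : G.Connected) (hH : H.Connected) {S : Set V}
    (hS : IsOuterGPSet G S) {a : V} (ha : a ∈ S) {ℓ : W} {c : V} {h : W}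
    (hc : c ∉ S \ {a}) (hch : h ≠ ℓ ∨ c = a) :
    IsGPSet (G □ H) (insert (c, h) ((S \ {a}) ×ˢ ({ℓ} : Set W))) := by
  intro u hu v hv p hp hlen w hw hwT
  by_cases huv : u = v
  · subst huv
    left
    exact walk_length_zero_mem p (by rw [hlen, SimpleGraph.dist_self]) w hw
  obtain ⟨q, r, hqp, hql, hrp, hrl, hsup⟩ := boxProd_geodesic_proj hG hH p hlen
  obtain ⟨hw1, hw2⟩ := hsup w hw
  simp only [Set.mem_insert_iff, Set.mem_prod, Set.mem_singleton_iff] at hu hv hwT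
  rcases hwT with hwch | ⟨hwS, hwl⟩
  · -- the extra robot `(c,h)` lies on the geodesic
    rcases hu with rfl | ⟨hu1, hu2⟩
    · left; exact hwch
    rcases hv with rfl | ⟨hv1, hv2⟩
    · right; exact hwch
    -- both endpoints lie in the base layer ℓ; then every vertex of p has 2nd coord ℓ
    exfalso
    have hr0 : r.length = 0 := by
      rw [hrl, hu2, hv2, SimpleGraph.dist_self]
    have h2 : w.2 = u.2 := walk_length_zero_mem r hr0 w.2 hw2
    have hhl : h = ℓ := by
      have h3 : h = u.2 := by rw [hwch] at h2; exact h2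
      rw [h3, hu2]
    have hca : c = a := hch.resolve_left (by simp [hhl])
    have hwa : w.1 = a := by rw [hwch]; exact hca
    have := hS u.1 hu1.1 v.1 q hqp hql w.1 hw1 (by rw [hwa]; exact ha)
    rw [hwa] at this
    rcases this with h' | h'
    · exact hu1.2 h'.symm
    · exact hv1.2 h'.symm
  · -- w lies in the base layer
    rcases hu with rfl | ⟨hu1, hu2⟩
    · -- u = (c,h); v must be in the base (else u = v)
      rcases hv with rfl | ⟨hv1, hv2⟩
      · exact absurd rfl huv
      have := hS.rev hv1.1 q hqp hql hw1 hwS.1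
      rcases this with h' | h'
      · right; exact Prod.ext h' (by rw [hwl, hv2])
      · have hc' : w.1 = c := h'
        exact absurd (hc' ▸ hwS) hc
    · rcases hv with rfl | ⟨hv1, hv2⟩
      · have := hS u.1 hu1.1 c q hqp hql w.1 hw1 hwS.1
        rcases this with h' | h'
        · left; exact Prod.ext h' (by rw [hwl, hu2])
        · have hc' : w.1 = c := h'
          exact absurd (hc' ▸ hwS) hc
      · have := hS u.1 hu1.1 v.1 q hqp hql w.1 hw1 hwS.1
        rcases this with h' | h'
        · left; exact Prod.ext h' (by rw [hwl, hu2])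
        · right; exact Prod.ext h' (by rw [hwl, hv2])

/-- Two-layer configuration: part of the robots in layer `ℓ`, the rest in layer `ℓ'`. -/
lemma gp_two_layers (hG : G.Connected) (hH : H.Connected) {S : Set V}
    (hS : IsOuterGPSet G S) {A B : Set V} (hAB : A ∪ B = S) (hd : Disjoint A B)
    (ℓ ℓ' : W) :
    IsGPSet (G □ H) (A ×ˢ ({ℓ} : Set W) ∪ B ×ˢ ({ℓ'} : Set W)) := by
  intro u hu v hv p hp hlen w hw hwT
  obtain ⟨q, r, hqp, hql, hrp, hrl, hsup⟩ := boxProd_geodesic_proj hG hH p hlen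
  obtain ⟨hw1, hw2⟩ := hsup w hw
  simp only [Set.mem_union, Set.mem_prod, Set.mem_singleton_iff] at hu hv hwT
  have hmemS : ∀ {x : V}, x ∈ A ∨ x ∈ B → x ∈ S := by
    intro x hx; rw [← hAB]; exact hx
  have huS : u.1 ∈ S := hmemS (by tauto)
  have hwS : w.1 ∈ S := hmemS (by tauto)
  have key := hS u.1 huS v.1 q hqp hql w.1 hw1 hwS
  have same : ∀ {x y : V × W}, x.1 = y.1 →
      ((x.1 ∈ A ∧ x.2 = ℓ) ∨ (x.1 ∈ B ∧ x.2 = ℓ')) →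
      ((y.1 ∈ A ∧ y.2 = ℓ) ∨ (y.1 ∈ B ∧ y.2 = ℓ')) → x = y := by
    rintro x y hxy (⟨hx1, hx2⟩ | ⟨hx1, hx2⟩) (⟨hy1, hy2⟩ | ⟨hy1, hy2⟩)
    · exact Prod.ext hxy (by rw [hx2, hy2])
    · exact absurd (hxy ▸ hx1) (fun hxA => hd.ne_of_mem hxA hy1 hxy)
    · exact absurd (hxy ▸ hx1) (fun hxB => (hd.ne_of_mem hy1 hxB) hxy.symm)
    · exact Prod.ext hxy (by rw [hx2, hy2])
  rcases key with h' | h'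
  · left; exact same h' hwT hu
  · right; exact same h' hwT hv


section Tours
variable {V : Type*} (G : SimpleGraph V)

/-- `Tours G S T A`: one can pass from configuration `S` to configuration `T` by legal moves,
with the union of all intermediate configurations containing `A`. -/
inductive Tours : Set V → Set V → Set V → Prop
  | refl (S : Set V) {A : Set V} (h : A ⊆ S) : Tours S S A
  | head {S T U A B : Set V} (h : LegalMove G S T) (t : Tours T U A) (hB : B ⊆ S ∪ A) :
      Tours S U B

variable {G}

lemma Tours.mono {S T A B : Set V} (h : Tours G S T A) (hBA : B ⊆ A) : Tours G S T B := by
  induction h with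
  | refl S hA => exact Tours.refl S (hBA.trans hA)
  | head hmv t hB ih => exact Tours.head hmv t (hBA.trans hB)

lemma Tours.cover_start {S T A : Set V} (h : Tours G S T A) : Tours G S T (A ∪ S) := by
  induction h with
  | refl S hA => exact Tours.refl S (Set.union_subset hA le_rfl)
  | @head S T U A B hmv t hB ih =>
      exact Tours.head hmv t (Set.union_subset hB Set.subset_union_left)

lemma Tours.trans {S T U A B : Set V} (h1 : Tours G S T A) (h2 : Tours G T U B) :
    Tours G S U (A ∪ B) := by
  induction h1 with
  | refl S hA =>
      exact h2.cover_start.mono (Set.union_subset (hA.trans Set.subset_union_right)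
        Set.subset_union_left)
  | @head S T T' A' B' hmv t hB ih =>
      exact Tours.head hmv (ih h2) (by
        refine (Set.union_subset_union_left B hB).trans ?_
        rw [Set.union_assoc])

lemma Tours.exists_seq {S T A : Set V} (h : Tours G S T A) :
    ∃ (k : ℕ) (f : ℕ → Set V), f 0 = S ∧
      (∀ i < k, LegalMove G (f i) (f (i + 1))) ∧ A ⊆ ⋃ i ∈ Set.Iic k, f i := by
  induction h with
  | refl S hA =>
      exact ⟨0, fun _ => S, rfl, by omega, by simpa using hA⟩
  | @head S T U A B hmv t hB ih =>
      obtain ⟨k, f, hf0, hmoves, hcov⟩ := ih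
      refine ⟨k + 1, fun i => if i = 0 then S else f (i - 1), by simp, ?_, ?_⟩
      · intro i hi
        rcases Nat.eq_zero_or_pos i with rfl | hpos
        · simpa [hf0] using hmv
        · have h1 : i ≠ 0 := hpos.ne'
          have h2 : i + 1 ≠ 0 := by omega
          simp only [h1, h2, if_false]
          have h3 : i + 1 - 1 = i - 1 + 1 := by omega
          rw [h3]
          exact hmoves (i - 1) (by omega)
      · intro x hx
        rcases hB hx with hxS | hxA
        · exact Set.mem_biUnion (by simp : (0:ℕ) ∈ Set.Iic (k+1)) (by simp [hxS])
        · obtain ⟨i, hi, hfi⟩ := by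
            simpa using hcov hxA
          exact Set.mem_biUnion (by simp; omega : i + 1 ∈ Set.Iic (k+1))
            (by simp [hfi])

lemma Tours.isMobile {S T : Set V} (hGP : IsGPSet G S) (h : Tours G S T Set.univ) :
    IsMobileGPSet G S := by
  obtain ⟨k, f, hf0, hmoves, hcov⟩ := h.exists_seq
  exact ⟨hGP, k, f, hf0, hmoves, Set.eq_univ_of_univ_subset hcov⟩

/-- A single robot at `u` walking along `w` (with the other robots fixed at `B`) yields a tour,
provided every vertex of the walk is unoccupied and gives a general position configuration. -/
lemma tours_of_walk {B : Set V} {u v : V} (w : G.Walk u v)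
    (hB : ∀ c ∈ w.support, c ∉ B) (hGP : ∀ c ∈ w.support, IsGPSet G (insert c B)) :
    Tours G (insert u B) (insert v B) (B ∪ {c | c ∈ w.support}) := by
  induction w with
  | nil =>
      refine Tours.refl _ ?_
      intro x hx
      rcases hx with hx | hx
      · exact Set.mem_insert_of_mem _ hx
      · simp only [Walk.support_nil, Set.mem_setOf_eq, List.mem_singleton] at hx
        simp [hx]
  | @cons a b c hadj q ih =>
      have haB : a ∉ B := hB a (by simp)
      have hbB : b ∉ B := hB b (by simp)
      have hmove : LegalMove G (insert a B) (insert b B) := by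
        refine ⟨hGP a (by simp), a, Set.mem_insert _ _, b, ?_, hadj, ?_, hGP b (by simp)⟩
        · intro hmem
          rcases hmem with h | h
          · exact hadj.ne h.symm
          · exact hbB h
        · rw [Set.insert_diff_self_of_notMem haB]
      have ht := ih (fun x hx => hB x (by simp [hx])) (fun x hx => hGP x (by simp [hx]))
      refine Tours.head hmove ht ?_
      intro x hx
      rcases hx with hx | hx
      · exact Or.inr (Or.inl hx)
      · simp only [Walk.support_cons, Set.mem_setOf_eq, List.mem_cons] at hx
        rcases hx with rfl | hx
        · exact Or.inl (Set.mem_insert _ _)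
        · exact Or.inr (Or.inr hx)

end Tours


section MoreAux
variable {V W : Type*} {G : SimpleGraph V} {H : SimpleGraph W}

lemma support_boxProdRight {b1 b2 : W} (a : V) (w : H.Walk b1 b2) :
    (w.boxProdRight G a).support = w.support.map (Prod.mk a) := by
  show (w.map (G.boxProdRight H a).toHom).support = _
  rw [Walk.support_map]
  rfl

lemma support_boxProdLeft {a1 a2 : V} (b : W) (w : G.Walk a1 a2) :
    (w.boxProdLeft H b).support = w.support.map (fun a => (a, b)) := by
  show (w.map (G.boxProdLeft H b).toHom).support = _
  rw [Walk.support_map]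
  rfl

lemma exists_covering_closed_walk [Finite W] (hH : H.Connected) (h0 : W) :
    ∃ w : H.Walk h0 h0, ∀ h : W, h ∈ w.support := by
  have : Fintype W := Fintype.ofFinite W
  classical
  have key : ∀ s : Finset W, ∃ w : H.Walk h0 h0, ∀ h ∈ s, h ∈ w.support := by
    intro s
    induction s using Finset.induction_on with
    | empty => exact ⟨Walk.nil, by simp⟩
    | @insert a s ha ih =>
        obtain ⟨w, hw⟩ := ih
        obtain ⟨p⟩ := hH.preconnected h0 a
        refine ⟨w.append (p.append p.reverse), ?_⟩
        intro h hh
        rw [Walk.mem_support_append_iff]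
        rcases Finset.mem_insert.mp hh with rfl | hh
        · exact Or.inr (by rw [Walk.mem_support_append_iff]; exact Or.inl p.end_mem_support)
        · exact Or.inl (hw h hh)
  obtain ⟨w, hw⟩ := key Finset.univ
  exact ⟨w, fun h => hw h (Finset.mem_univ h)⟩

end MoreAux


section Main
variable {V W : Type*} {G : SimpleGraph V} {H : SimpleGraph W}

lemma exists_avoiding_walk (hG : G.Connected) {S : Set V} (hS : IsOuterGPSet G S)
    {u0 : V} (hu0 : u0 ∈ S) (c : V) (hc : c ∉ S \ {u0}) :
    ∃ w : G.Walk u0 c, ∀ z ∈ w.support, z ∉ S \ {u0} := by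
  obtain ⟨p, hp, hpl⟩ := (hG.preconnected u0 c).exists_path_of_dist
  refine ⟨p, fun z hz hzS => ?_⟩
  rcases hS u0 hu0 c p hp hpl z hz hzS.1 with rfl | rfl
  · exact hzS.2 rfl
  · exact hc hzS

lemma gpo_le_mob_boxProd {V W : Type*} [Finite V] [Finite W]
    (G : SimpleGraph V) (H : SimpleGraph W)
    (hG : G.Connected) (hH : H.Connected) (hW : 2 ≤ Nat.card W) :
    gpo G ≤ mob (G □ H) := by
  have hBdd : BddAbove {n | ∃ S : Set (V × W), IsMobileGPSet (G □ H) S ∧ S.ncard = n} := by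
    refine ⟨Nat.card (V × W), ?_⟩
    rintro n ⟨S, _, rfl⟩
    rw [← Set.ncard_univ]
    exact Set.ncard_le_ncard (Set.subset_univ S) Set.finite_univ
  have hne : {n | ∃ S : Set V, IsOuterGPSet G S ∧ S.ncard = n}.Nonempty :=
    ⟨0, ∅, fun u hu => absurd hu (Set.notMem_empty u), Set.ncard_empty _⟩
  refine csSup_le hne ?_
  rintro n ⟨S, hS, rfl⟩
  rcases S.eq_empty_or_nonempty with rfl | ⟨u0, hu0⟩
  · simp only [Set.ncard_empty]
    exact Nat.zero_le _
  -- setup: a base layer h0 and an adjacent layer h1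
  have hWnt : Nontrivial W := Finite.one_lt_card_iff_nontrivial.mp hW
  obtain ⟨h0⟩ : Nonempty W := hH.nonempty
  obtain ⟨h1', hh1ne⟩ := exists_ne h0
  obtain ⟨wp⟩ := hH.preconnected h0 h1'
  obtain ⟨h1, hadj01⟩ : ∃ h1, H.Adj h0 h1 := by
    cases wp with
    | nil => exact absurd rfl hh1ne.symm
    | cons h q => exact ⟨_, h⟩
  have hne10 : h1 ≠ h0 := hadj01.ne'
  set S0 : Set (V × W) := S ×ˢ ({h0} : Set W) with hS0
  set Bu : Set (V × W) := (S \ {u0}) ×ˢ ({h0} : Set W) with hBudef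
  -- basic set identity
  have hcol : ∀ a ∈ S, ∀ ℓ : W,
      insert (a, ℓ) ((S \ {a}) ×ˢ ({ℓ} : Set W)) = S ×ˢ ({ℓ} : Set W) := by
    intro a ha ℓ
    ext ⟨z1, z2⟩
    simp only [Set.mem_insert_iff, Set.mem_prod, Set.mem_singleton_iff, Set.mem_diff,
      Prod.mk.injEq]
    constructor
    · rintro (⟨rfl, rfl⟩ | ⟨⟨h1, _⟩, h2⟩)
      · exact ⟨ha, rfl⟩
      · exact ⟨h1, h2⟩
    · rintro ⟨hz1, rfl⟩
      by_cases hz : z1 = a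
      · exact Or.inl ⟨hz, rfl⟩
      · exact Or.inr ⟨⟨hz1, hz⟩, rfl⟩
  have hGP0 : ∀ ℓ : W, IsGPSet (G □ H) (S ×ˢ ({ℓ} : Set W)) := by
    intro ℓ
    have := gp_two_layers hG hH hS (A := S) (B := ∅) (Set.union_empty S)
      (Set.disjoint_empty S) ℓ ℓ
    simpa using this
  -- Phase 1 : column tours
  obtain ⟨wcov, hwcov⟩ := exists_covering_closed_walk hH h0
  have phase1 : ∀ a ∈ S, Tours (G □ H) S0 S0 (({a} : Set V) ×ˢ (Set.univ : Set W)) := by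
    intro a ha
    have hsupp : ∀ c ∈ (wcov.boxProdRight G a).support, c.1 = a := by
      intro c hc
      rw [support_boxProdRight] at hc
      obtain ⟨b, _, rfl⟩ := List.mem_map.mp hc
      rfl
    have hBw : ∀ c ∈ (wcov.boxProdRight G a).support,
        c ∉ (S \ {a}) ×ˢ ({h0} : Set W) := by
      intro c hc hmem
      exact hmem.1.2 (hsupp c hc)
    have hGPw : ∀ c ∈ (wcov.boxProdRight G a).support,
        IsGPSet (G □ H) (insert c ((S \ {a}) ×ˢ ({h0} : Set W))) := by
      intro c hc
      have hc1 : c = (a, c.2) := Prod.ext (hsupp c hc) rfl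
      rw [hc1]
      exact gp_insert_config hG hH hS ha (by simp) (Or.inr rfl)
    have ht := tours_of_walk (wcov.boxProdRight G a) hBw hGPw
    rw [hcol a ha h0] at ht
    refine ht.mono ?_
    rintro ⟨z1, z2⟩ hz
    simp only [Set.mem_prod, Set.mem_singleton_iff, Set.mem_univ, and_true] at hz
    subst hz
    refine Or.inr ?_
    show (z1, z2) ∈ (wcov.boxProdRight G z1).support
    rw [support_boxProdRight]
    exact List.mem_map.mpr ⟨z2, hwcov z2, rfl⟩
  have T1 : Tours (G □ H) S0 S0 (S ×ˢ (Set.univ : Set W)) := by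
    refine Set.Finite.induction_on_subset
      (motive := fun T _ => Tours (G □ H) S0 S0 (T ×ˢ (Set.univ : Set W))) S (Set.toFinite S)
      (Tours.refl _ (by simp)) ?_
    intro a T haS hTS haT ih
    refine ((phase1 a haS).trans ih).mono ?_
    rintro ⟨z1, z2⟩ hz
    simp only [Set.mem_prod, Set.mem_insert_iff, Set.mem_univ, and_true] at hz
    rcases hz with rfl | hz
    · exact Or.inl (by simp)
    · exact Or.inr (by simp [hz])
  -- Phase 2 : excursions of the robot at u0 covering all columns outside S \ {u0},
  -- in layers different from h0
  have tour2 : ∀ (c : V) (h : W), c ∉ S \ {u0} → h ≠ h0 →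
      Tours (G □ H) S0 S0 {((c, h) : V × W)} := by
    intro c h hc hh
    obtain ⟨wv⟩ := hH.preconnected h0 h
    obtain ⟨wg, hwg⟩ := exists_avoiding_walk hG hS hu0 c hc
    have hu0n : u0 ∉ S \ {u0} := fun hmem => hmem.2 rfl
    set P : (G □ H).Walk (u0, h0) (u0, h) := wv.boxProdRight G u0 with hP
    set Q : (G □ H).Walk (u0, h) (c, h) := wg.boxProdLeft H h with hQ
    set full : (G □ H).Walk (u0, h0) (c, h) := P.append Q with hfull
    have hsupfull : ∀ z ∈ full.support, z.1 ∉ S \ {u0} ∧ (z.2 ≠ h0 ∨ z.1 = u0) := by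
      intro z hz
      rcases (Walk.mem_support_append_iff _ _).mp hz with hz | hz
      · rw [hP, support_boxProdRight] at hz
        obtain ⟨b, _, rfl⟩ := List.mem_map.mp hz
        exact ⟨hu0n, Or.inr rfl⟩
      · rw [hQ, support_boxProdLeft] at hz
        obtain ⟨g, hg, rfl⟩ := List.mem_map.mp hz
        exact ⟨hwg g hg, Or.inl hh⟩
    set closed : (G □ H).Walk (u0, h0) (u0, h0) := full.append full.reverse with hclosed
    have hsupclosed : ∀ z ∈ closed.support, z.1 ∉ S \ {u0} ∧ (z.2 ≠ h0 ∨ z.1 = u0) := by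
      intro z hz
      rcases (Walk.mem_support_append_iff _ _).mp hz with hz | hz
      · exact hsupfull z hz
      · rw [Walk.support_reverse, List.mem_reverse] at hz
        exact hsupfull z hz
    have hB : ∀ z ∈ closed.support, z ∉ Bu := by
      intro z hz hmem
      exact (hsupclosed z hz).1 hmem.1
    have hGPc : ∀ z ∈ closed.support, IsGPSet (G □ H) (insert z Bu) := by
      intro z hz
      have hz1 : z = (z.1, z.2) := rfl
      rw [hz1, hBudef]
      exact gp_insert_config hG hH hS hu0 (hsupclosed z hz).1
        ((hsupclosed z hz).2.imp id id)
    have ht := tours_of_walk closed hB hGPc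
    rw [hBudef, hcol u0 hu0 h0] at ht
    refine ht.mono ?_
    intro x hx
    rw [Set.mem_singleton_iff] at hx
    subst hx
    refine Or.inr ?_
    show (c, h) ∈ closed.support
    rw [hclosed, Walk.mem_support_append_iff]
    exact Or.inl full.end_mem_support
  set D2 : Set (V × W) := {z : V × W | z.1 ∉ S \ {u0} ∧ z.2 ≠ h0} with hD2
  have T2 : Tours (G □ H) S0 S0 D2 := by
    refine Set.Finite.induction_on_subset (motive := fun T _ => Tours (G □ H) S0 S0 T) D2 (Set.toFinite D2)
      (Tours.refl _ (Set.empty_subset _)) ?_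
    intro a T haD hTD haT ih
    have ha2 : a.1 ∉ S \ {u0} ∧ a.2 ≠ h0 := haD
    have := tour2 a.1 a.2 ha2.1 ha2.2
    refine (this.trans ih).mono ?_
    intro x hx
    rcases Set.mem_insert_iff.mp hx with rfl | hx
    · exact Or.inl rfl
    · exact Or.inr hx
  -- Phase 3 : shifting the stationary robots to layer h1
  set cfg : Set V → Set (V × W) :=
    fun T => ((S \ T) ×ˢ ({h0} : Set W)) ∪ (T ×ˢ ({h1} : Set W)) with hcfg
  have hcfg0 : cfg ∅ = S0 := by simp [hcfg, hS0]
  have shift : ∀ T : Set V, T ⊆ S \ {u0} → Tours (G □ H) S0 (cfg T) ∅ := by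
    intro T
    refine Set.Finite.induction_on
      (motive := fun T _ => T ⊆ S \ {u0} → Tours (G □ H) S0 (cfg T) ∅) T (Set.toFinite T)
      (fun _ => by rw [hcfg0]; exact Tours.refl _ (Set.empty_subset _)) ?_
    intro x T hxT hTfin ih hsub
    have hxS : x ∈ S \ {u0} := hsub (Set.mem_insert _ _)
    have hTS' : T ⊆ S \ {u0} := (Set.subset_insert _ _).trans hsub
    have hTS : T ⊆ S := hTS'.trans Set.diff_subset
    have ht := ih hTS'
    have hGPT : IsGPSet (G □ H) (cfg T) :=
      gp_two_layers hG hH hS (Set.diff_union_of_subset hTS) Set.disjoint_sdiff_left h0 h1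
    have hGPT' : IsGPSet (G □ H) (cfg (insert x T)) :=
      gp_two_layers hG hH hS
        (Set.diff_union_of_subset ((Set.insert_subset_iff.mpr ⟨hxS.1, hTS⟩)))
        Set.disjoint_sdiff_left h0 h1
    have hmove : LegalMove (G □ H) (cfg T) (cfg (insert x T)) := by
      refine ⟨hGPT, (x, h0), ?_, (x, h1), ?_, ?_, ?_, hGPT'⟩
      · exact Or.inl (by exact ⟨⟨hxS.1, hxT⟩, rfl⟩)
      · rintro (hmem | hmem)
        · exact hne10 hmem.2
        · exact hxT hmem.1
      · exact boxProd_adj.mpr (Or.inr ⟨hadj01, rfl⟩)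
      · ext ⟨z1, z2⟩
        simp only [hcfg, Set.mem_insert_iff, Set.mem_union, Set.mem_prod,
          Set.mem_singleton_iff, Set.mem_diff, Prod.mk.injEq]
        constructor
        · rintro (⟨⟨hz1S, hz1n⟩, rfl⟩ | ⟨hz1, rfl⟩)
          · refine Or.inr ⟨Or.inl ⟨⟨hz1S, fun hmem => hz1n (Or.inr hmem)⟩, rfl⟩, ?_⟩
            rintro ⟨rfl, -⟩
            exact hz1n (Or.inl rfl)
          · rcases hz1 with rfl | hz1T
            · exact Or.inl ⟨rfl, rfl⟩
            · refine Or.inr ⟨Or.inr ⟨hz1T, rfl⟩, ?_⟩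
              rintro ⟨-, h⟩
              exact hne10 h
        · rintro (⟨rfl, rfl⟩ | ⟨(⟨⟨hz1S, hz1T⟩, rfl⟩ | ⟨hz1T, rfl⟩), hne⟩)
          · exact Or.inr ⟨Or.inl rfl, rfl⟩
          · refine Or.inl ⟨⟨hz1S, ?_⟩, rfl⟩
            rintro (rfl | hmem)
            · exact hne ⟨rfl, rfl⟩
            · exact hz1T hmem
          · exact Or.inr ⟨Or.inr hz1T, rfl⟩
    have hstep : Tours (G □ H) (cfg T) (cfg (insert x T)) ∅ :=
      Tours.head hmove (Tours.refl _ (Set.empty_subset _)) (Set.empty_subset _)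
    exact (ht.trans hstep).mono (Set.empty_subset _)
  set cfgF : Set (V × W) := cfg (S \ {u0}) with hcfgFdef
  have Tshift : Tours (G □ H) S0 cfgF ∅ := shift _ le_rfl
  have hcfgF : cfgF = insert (u0, h0) ((S \ {u0}) ×ˢ ({h1} : Set W)) := by
    rw [hcfgFdef]
    show (S \ (S \ {u0})) ×ˢ ({h0} : Set W) ∪ (S \ {u0}) ×ˢ ({h1} : Set W) = _
    rw [Set.diff_diff_cancel_left (Set.singleton_subset_iff.mpr hu0),
      Set.singleton_prod_singleton, Set.insert_eq]
  -- Phase 4 : excursions in layer h0 while the stationary robots are in layer h1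
  have tour4 : ∀ c : V, c ∉ S \ {u0} → Tours (G □ H) cfgF cfgF {((c, h0) : V × W)} := by
    intro c hc
    obtain ⟨wg, hwg⟩ := exists_avoiding_walk hG hS hu0 c hc
    set R : (G □ H).Walk (u0, h0) (c, h0) := wg.boxProdLeft H h0 with hR
    set closed : (G □ H).Walk (u0, h0) (u0, h0) := R.append R.reverse with hclosed
    have hsup : ∀ z ∈ closed.support, z.1 ∉ S \ {u0} ∧ z.2 = h0 := by
      intro z hz
      have hzR : z ∈ R.support := by
        rcases (Walk.mem_support_append_iff _ _).mp hz with hz | hz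
        · exact hz
        · rwa [Walk.support_reverse, List.mem_reverse] at hz
      rw [hR, support_boxProdLeft] at hzR
      obtain ⟨g, hg, rfl⟩ := List.mem_map.mp hzR
      exact ⟨hwg g hg, rfl⟩
    have hB : ∀ z ∈ closed.support, z ∉ (S \ {u0}) ×ˢ ({h1} : Set W) := by
      intro z hz hmem
      exact hne10 (((hsup z hz).2 ▸ hmem.2).symm ▸ rfl)
    have hGPc : ∀ z ∈ closed.support,
        IsGPSet (G □ H) (insert z ((S \ {u0}) ×ˢ ({h1} : Set W))) := by
      intro z hz
      have hz1 : z = (z.1, z.2) := rfl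
      rw [hz1]
      exact gp_insert_config hG hH hS hu0 (hsup z hz).1
        (Or.inl (by rw [(hsup z hz).2]; exact fun h => hne10 h.symm))
    have ht := tours_of_walk closed hB hGPc
    rw [← hcfgF] at ht
    refine ht.mono ?_
    intro x hx
    rw [Set.mem_singleton_iff] at hx
    subst hx
    refine Or.inr ?_
    show (c, h0) ∈ closed.support
    rw [hclosed, Walk.mem_support_append_iff]
    exact Or.inl R.end_mem_support
  set D4 : Set (V × W) := {z : V × W | z.1 ∉ S \ {u0} ∧ z.2 = h0} with hD4
  have T4 : Tours (G □ H) cfgF cfgF D4 := by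
    refine Set.Finite.induction_on_subset (motive := fun T _ => Tours (G □ H) cfgF cfgF T)
      D4 (Set.toFinite D4) (Tours.refl _ (Set.empty_subset _)) ?_
    intro a T haD hTD haT ih
    have ha2 : a.1 ∉ S \ {u0} ∧ a.2 = h0 := haD
    have hta : a = (a.1, h0) := Prod.ext rfl ha2.2
    have := tour4 a.1 ha2.1
    rw [← hta] at this
    refine (this.trans ih).mono ?_
    intro x hx
    rcases Set.mem_insert_iff.mp hx with rfl | hx
    · exact Or.inl rfl
    · exact Or.inr hx
  -- Assemble
  have Tall := T1.trans (T2.trans (Tshift.trans T4))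
  have hcover : (Set.univ : Set (V × W)) ⊆
      (S ×ˢ (Set.univ : Set W)) ∪ (D2 ∪ (∅ ∪ D4)) := by
    rintro ⟨z1, z2⟩ -
    by_cases hz1S : z1 ∈ S
    · exact Or.inl ⟨hz1S, Set.mem_univ _⟩
    · have hz1 : z1 ∉ S \ {u0} := fun h => hz1S h.1
      by_cases hz2 : z2 = h0
      · exact Or.inr (Or.inr (Or.inr ⟨hz1, hz2⟩))
      · exact Or.inr (Or.inl ⟨hz1, hz2⟩)
  have hmobile : IsMobileGPSet (G □ H) S0 := (Tall.mono hcover).isMobile (hGP0 h0)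
  refine le_csSup hBdd ⟨S0, hmobile, ?_⟩
  have himg : S0 = (fun c => (c, h0)) '' S := by
    ext ⟨z1, z2⟩
    simp only [hS0, Set.mem_prod, Set.mem_singleton_iff, Set.mem_image, Prod.mk.injEq]
    constructor
    · rintro ⟨hz, rfl⟩; exact ⟨z1, hz, rfl, rfl⟩
    · rintro ⟨c, hc, rfl, rfl⟩; exact ⟨hc, rfl⟩
  rw [himg, Set.ncard_image_of_injective _ (fun a b hab => (Prod.ext_iff.mp hab).1)]

end Main


section Iso
variable {V V' : Type*} {G : SimpleGraph V} {G' : SimpleGraph V'}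

lemma iso_reachable (e : G ≃g G') (u v : V) :
    G'.Reachable (e u) (e v) ↔ G.Reachable u v := by
  constructor
  · rintro ⟨p⟩
    exact ⟨(p.map e.symm.toHom).copy (e.symm_apply_apply u) (e.symm_apply_apply v)⟩
  · rintro ⟨p⟩
    exact ⟨p.map e.toHom⟩

lemma iso_dist (e : G ≃g G') (u v : V) : G'.dist (e u) (e v) = G.dist u v := by
  by_cases hr : G.Reachable u v
  · apply le_antisymm
    · obtain ⟨p, hp⟩ := hr.exists_walk_length_eq_dist
      have := SimpleGraph.dist_le (p.map e.toHom)
      rwa [Walk.length_map, hp] at this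
    · obtain ⟨p', hp'⟩ := ((iso_reachable e u v).mpr hr).exists_walk_length_eq_dist
      have := SimpleGraph.dist_le
        ((p'.map e.symm.toHom).copy (e.symm_apply_apply u) (e.symm_apply_apply v))
      rwa [Walk.length_copy, Walk.length_map, hp'] at this
  · rw [SimpleGraph.dist_eq_zero_of_not_reachable hr,
      SimpleGraph.dist_eq_zero_of_not_reachable (fun h => hr ((iso_reachable e u v).mp h))]

lemma iso_isGPSet (e : G ≃g G') {S : Set V} (h : IsGPSet G S) : IsGPSet G' (e '' S) := by
  rintro u' hu' v' hv' p' hp' hl' w' hw' hw'S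
  obtain ⟨u, hu, rfl⟩ := hu'
  obtain ⟨v, hv, rfl⟩ := hv'
  obtain ⟨w, hwS, rfl⟩ := hw'S
  have hinj : Function.Injective (e.symm.toHom : V' → V) := e.symm.toEquiv.injective
  set p : G.Walk u v :=
    (p'.map e.symm.toHom).copy (e.symm_apply_apply u) (e.symm_apply_apply v) with hpdef
  have hp : p.IsPath := by
    rw [hpdef, Walk.isPath_copy]
    exact Walk.map_isPath_of_injective hinj hp'
  have hl : p.length = G.dist u v := by
    rw [hpdef, Walk.length_copy, Walk.length_map, hl', iso_dist]
  have hwp : w ∈ p.support := by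
    rw [hpdef, Walk.support_copy, Walk.support_map]
    have := List.mem_map_of_mem (f := (e.symm.toHom : V' → V)) hw'
    simpa using this
  rcases h u hu v hv p hp hl w hwp hwS with rfl | rfl
  · exact Or.inl rfl
  · exact Or.inr rfl

lemma iso_legalMove (e : G ≃g G') {S T : Set V} (h : LegalMove G S T) :
    LegalMove G' (e '' S) (e '' T) := by
  obtain ⟨hGP, u, hu, v, hv, hadj, rfl, hGP'⟩ := h
  refine ⟨iso_isGPSet e hGP, e u, Set.mem_image_of_mem e hu, e v, ?_, ?_, ?_, iso_isGPSet e hGP'⟩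
  · rintro ⟨x, hx, hex⟩
    exact hv (e.toEquiv.injective hex ▸ hx)
  · exact e.map_adj_iff.mpr hadj
  · have hinj : Function.Injective (⇑e : V → V') := fun a b h => e.toEquiv.injective h
    rw [Set.image_insert_eq, Set.image_diff hinj, Set.image_singleton]

lemma iso_isMobile (e : G ≃g G') {S : Set V} (h : IsMobileGPSet G S) :
    IsMobileGPSet G' (e '' S) := by
  obtain ⟨hGP, k, f, hf0, hmoves, hcov⟩ := h
  refine ⟨iso_isGPSet e hGP, k, fun i => e '' f i, by show e '' f 0 = e '' S; rw [hf0],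
    fun i hi => iso_legalMove e (hmoves i hi), ?_⟩
  have : (⋃ i ∈ Set.Iic k, e '' f i) = e '' ⋃ i ∈ Set.Iic k, f i := by
    rw [Set.image_iUnion₂]
  rw [this, hcov, Set.image_univ]
  exact Set.range_eq_univ.mpr e.toEquiv.surjective

lemma mob_le_iso [Finite V'] (e : G ≃g G') : mob G ≤ mob G' := by
  rcases Set.eq_empty_or_nonempty {n | ∃ S : Set V, IsMobileGPSet G S ∧ S.ncard = n} with he | hne
  · unfold mob
    rw [he, csSup_empty]
    exact bot_le
  · refine csSup_le hne ?_
    rintro n ⟨S, hS, rfl⟩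
    refine le_csSup ⟨Nat.card V', ?_⟩
      ⟨e '' S, iso_isMobile e hS, Set.ncard_image_of_injective _ e.toEquiv.injective⟩
    rintro m ⟨T, hT, rfl⟩
    rw [← Set.ncard_univ]
    exact Set.ncard_le_ncard (Set.subset_univ T) Set.finite_univ

end Iso


theorem mob_boxProd_ge_max_gpo {V W : Type*} [Finite V] [Finite W]
    (G : SimpleGraph V) (H : SimpleGraph W)
    (hG : G.Connected) (hH : H.Connected)
    (hV : 2 ≤ Nat.card V) (hW : 2 ≤ Nat.card W) :
    max (gpo G) (gpo H) ≤ mob (G □ H) := by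
  refine max_le (gpo_le_mob_boxProd G H hG hH hW) ?_
  exact (gpo_le_mob_boxProd H G hH hG hV).trans (mob_le_iso (boxProdComm H G))
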